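/- Let Y be a complete length space, p ∈ Y, and 0 < δ' < δ. If π₁(Y,δ,p) ≠ π₁(Y,δ',p), then there exist a rectifiable loop β in Y of length strictly less than 2δ and a path α from p to β(0) such that the homotopy class of α⁻¹·β·α lies in π₁(Y,δ,p) but does not lie in π₁(Y,δ',p). -/

import Mathlib

/- Common definitions: path length, length/geodesic spaces, δ-covering groups,
   covering spectra, cut-off covering groups and spectra, free homotopy,
   loops-to-infinity. -/

open Metric Filter
open scoped NNReal ENNReal unitInterval

attribute [local instance] Path.Homotopic.setoid

/-- The length (total variation) of a path in a metric space. -/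
noncomputable def pathLength {X : Type*} [MetricSpace X] {x y : X} (γ : Path x y) : ℝ≥0∞ :=
  eVariationOn γ Set.univ

/-- A metric space is a length space if the distance between any two points is the
infimum of the lengths of paths joining them. -/
def IsLengthSpace (X : Type*) [MetricSpace X] : Prop :=
  ∀ x y : X, ENNReal.ofReal (dist x y) = ⨅ γ : Path x y, pathLength γ

/-- A metric space is a geodesic space if any two points are joined by a
distance-realizing path. -/
def IsGeodesicSpace (X : Type*) [MetricSpace X] : Prop :=
  ∀ x y : X, ∃ γ : Path x y, pathLength γ = ENNReal.ofReal (dist x y)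

/-- The element of the fundamental group at `p` represented by the loop
`α⁻¹ · β · α` (i.e. follow `α` from `p` to `y`, the loop `β` at `y`, then `α` back). -/
noncomputable def loopClass {X : Type*} [TopologicalSpace X] {p y : X}
    (α : Path p y) (β : Path y y) : FundamentalGroup X p :=
  FundamentalGroup.fromPath (X := TopCat.of X) ⟦(α.trans β).trans α.symm⟧

/-- The δ-covering group `π₁(X, δ, p)`: the normal subgroup of `π₁(X,p)` generated by
classes of loops `α⁻¹·β·α` with `β` lying in some open ball of radius `δ`. -/
noncomputable def coveringGroup (X : Type*) [MetricSpace X] (p : X) (δ : ℝ) :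
    Subgroup (FundamentalGroup X p) :=
  Subgroup.normalClosure
    {g | ∃ (y : X) (β : Path y y) (α : Path p y),
      (∃ c : X, ∀ t, β t ∈ Metric.ball c δ) ∧ g = loopClass α β}

/-- The covering spectrum of `X` (with basepoint `p`). -/
def covSpec (X : Type*) [MetricSpace X] (p : X) : Set ℝ :=
  {δ | 0 < δ ∧ ∀ δ' > δ, coveringGroup X p δ' ≠ coveringGroup X p δ}

/-- The `R` cut-off δ-covering group `π₁^{cut}(X, δ, R, x)`: the normal subgroup of
`π₁(X,x)` generated by classes of loops `α⁻¹·β·α` with `β` lying in some open ball of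
radius `δ` or in the complement of the closed ball `B̄(x,R)`. -/
noncomputable def cutCoveringGroup (X : Type*) [MetricSpace X] (x : X) (δ R : ℝ) :
    Subgroup (FundamentalGroup X x) :=
  Subgroup.normalClosure
    {g | ∃ (y : X) (β : Path y y) (α : Path x y),
      ((∃ c : X, ∀ t, β t ∈ Metric.ball c δ) ∨ (∀ t, β t ∉ Metric.closedBall x R)) ∧
      g = loopClass α β}

/-- The `R` cut-off covering spectrum of `(X,x)`. -/
def cutCovSpec (X : Type*) [MetricSpace X] (x : X) (R : ℝ) : Set ℝ :=
  {δ | 0 < δ ∧ ∀ δ' > δ, cutCoveringGroup X x δ' R ≠ cutCoveringGroup X x δ R}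

/-- Two loops are freely homotopic: there is a homotopy through (not necessarily
based) loops from one to the other. -/
def FreelyHomotopic {X : Type*} [TopologicalSpace X] {a b : X}
    (γ₀ : Path a a) (γ₁ : Path b b) : Prop :=
  ∃ H : C(I × I, X),
    (∀ t, H (0, t) = γ₀ t) ∧ (∀ t, H (1, t) = γ₁ t) ∧ ∀ s, H (s, 0) = H (s, 1)

/-- Two loops are freely homotopic within a subset `A`: the homotopy stays in `A`. -/
def FreelyHomotopicIn {X : Type*} [TopologicalSpace X] (A : Set X) {a b : X}
    (γ₀ : Path a a) (γ₁ : Path b b) : Prop :=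
  ∃ H : C(I × I, X),
    (∀ t, H (0, t) = γ₀ t) ∧ (∀ t, H (1, t) = γ₁ t) ∧ (∀ s, H (s, 0) = H (s, 1)) ∧
    ∀ p, H p ∈ A

/-- A loop has the loops-to-infinity property: for every compact set it is freely
homotopic to a loop outside that set. -/
def LoopToInfinity {X : Type*} [TopologicalSpace X] {a : X} (γ : Path a a) : Prop :=
  ∀ K : Set X, IsCompact K →
    ∃ (b : X) (η : Path b b), (∀ t, η t ∉ K) ∧ FreelyHomotopic γ η

/-- A space has the loops-to-infinity property if all of its loops do. -/
def LoopsToInfinity (X : Type*) [TopologicalSpace X] : Prop :=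
  ∀ (a : X) (γ : Path a a), LoopToInfinity γ

/-- Concatenation of a finite list of loops based at `q`. -/
noncomputable def loopConcat {X : Type*} [TopologicalSpace X] (q : X) :
    List (Path q q) → Path q q
  | [] => Path.refl q
  | γ :: rest => γ.trans (loopConcat q rest)

/-- A space is semilocally simply connected if every point has a neighborhood in which
every loop is null-homotopic in the whole space. -/
def SemilocallySimplyConnected (X : Type*) [TopologicalSpace X] : Prop :=
  ∀ x : X, ∃ U ∈ nhds x, ∀ (y : X) (γ : Path y y), (∀ t, γ t ∈ U) →
    γ.Homotopic (Path.refl y)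

/-- A pointed ε-Hausdorff approximation. -/
def IsPointedHausdorffApprox {Z₁ Z₂ : Type*} [MetricSpace Z₁] [MetricSpace Z₂]
    (f : Z₁ → Z₂) (p₁ : Z₁) (p₂ : Z₂) (ε : ℝ) : Prop :=
  f p₁ = p₂ ∧ (∀ a b : Z₁, |dist (f a) (f b) - dist a b| < ε) ∧
    ∀ z : Z₂, ∃ a : Z₁, dist z (f a) ≤ ε

instance coveringGroup_normal (X : Type*) [MetricSpace X] (p : X) (δ : ℝ) :
    (coveringGroup X p δ).Normal :=
  Subgroup.normalClosure_normal

instance cutCoveringGroup_normal (X : Type*) [MetricSpace X] (x : X) (δ R : ℝ) :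
    (cutCoveringGroup X x δ R).Normal :=
  Subgroup.normalClosure_normal

section AuxBasic
open Metric Set CategoryTheory

variable {X : Type*} [MetricSpace X] {x y z : X}

lemma pathLength_cast (γ : Path x y) {x' y' : X} (h1 : x' = x) (h2 : y' = y) :
    pathLength (γ.cast h1 h2) = pathLength γ := rfl

lemma pathLength_symm (γ : Path x y) : pathLength γ.symm = pathLength γ := by
  unfold pathLength
  have h : ⇑γ.symm = ⇑γ ∘ unitInterval.symm := rfl
  have hanti : AntitoneOn unitInterval.symm (Set.univ : Set I) := by
    intro a _ b _ hab
    show (1:ℝ) - ↑b ≤ 1 - ↑a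
    have : (a:ℝ) ≤ b := hab
    linarith
  rw [h, eVariationOn.comp_eq_of_antitoneOn ⇑γ unitInterval.symm hanti, Set.image_univ,
    (Function.Involutive.surjective unitInterval.symm_symm).range_eq]

lemma edist_le_pathLength (γ : Path x y) (s t : I) : edist (γ s) (γ t) ≤ pathLength γ :=
  eVariationOn.edist_le ⇑γ (Set.mem_univ s) (Set.mem_univ t)

lemma univ_eq_Icc : (Set.univ : Set I) = Set.Icc 0 1 := by
  ext t
  simp only [Set.mem_univ, Set.mem_Icc, true_iff]
  exact ⟨t.2.1, t.2.2⟩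

lemma pathLength_trans_le (γ : Path x y) (γ' : Path y z) :
    pathLength (γ.trans γ') ≤ pathLength γ + pathLength γ' := by
  unfold pathLength
  set half : I := ⟨1/2, by norm_num⟩ with hhalf
  have h0h : (0:I) ≤ half := by show (0:ℝ) ≤ 1/2; norm_num
  have hh1 : half ≤ (1:I) := by show (1:ℝ)/2 ≤ 1; norm_num
  have key := eVariationOn.Icc_add_Icc (⇑(γ.trans γ')) h0h hh1 (Set.mem_univ half)
  rw [Set.univ_inter, Set.univ_inter, Set.univ_inter, ← univ_eq_Icc] at key
  rw [← key]
  have h1 : eVariationOn (⇑(γ.trans γ')) (Set.Icc 0 half) ≤ eVariationOn (⇑γ) Set.univ := by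
    set φ : I → I := fun t => ⟨min (2*(t:ℝ)) 1, ⟨le_min (mul_nonneg (by norm_num) t.2.1) zero_le_one, min_le_right _ _⟩⟩
      with hφ
    have heq : Set.EqOn (⇑(γ.trans γ')) (⇑γ ∘ φ) (Set.Icc 0 half) := by
      intro t ht
      have ht2 : (t:ℝ) ≤ 1/2 := ht.2
      simp only [Function.comp_apply, Path.trans_apply, dif_pos ht2, hφ]
      congr 1
      exact Subtype.ext (by simp; linarith)
    rw [eVariationOn.eq_of_eqOn heq]
    refine eVariationOn.comp_le_of_monotoneOn _ φ ?_ (Set.mapsTo_univ _ _)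
    intro a _ b _ hab
    show min (2*(a:ℝ)) 1 ≤ min (2*(b:ℝ)) 1
    exact min_le_min (by have : (a:ℝ) ≤ b := hab; linarith) le_rfl
  have h2 : eVariationOn (⇑(γ.trans γ')) (Set.Icc half 1) ≤ eVariationOn (⇑γ') Set.univ := by
    set ψ : I → I := fun t => ⟨max (2*(t:ℝ)-1) 0,
      ⟨le_max_right _ _, max_le (by have := t.2.2; linarith) zero_le_one⟩⟩ with hψ
    have heq : Set.EqOn (⇑(γ.trans γ')) (⇑γ' ∘ ψ) (Set.Icc half 1) := by
      intro t ht
      have ht1 : (1:ℝ)/2 ≤ (t:ℝ) := ht.1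
      show (γ.trans γ') t = γ' (ψ t)
      rw [Path.trans_apply]
      split_ifs with h
      · have hteq : (t:ℝ) = 1/2 := le_antisymm h ht1
        have hv : ∀ (hh : 2*(t:ℝ) ∈ Set.Icc (0:ℝ) 1), γ ⟨2*(t:ℝ), hh⟩ = y := by
          intro hh
          have : (⟨2*(t:ℝ), hh⟩ : I) = 1 := Subtype.ext (show (2*(t:ℝ)) = _ by rw [hteq]; norm_num)
          rw [this, γ.target]
        rw [hv _]
        have : ψ t = 0 := Subtype.ext (show max (2*(t:ℝ)-1) 0 = 0 by rw [hteq]; norm_num)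
        rw [this, γ'.source]
      · congr 1
        exact Subtype.ext (show (2*(t:ℝ)-1) = max (2*(t:ℝ)-1) 0 from (max_eq_left (by linarith)).symm)
    rw [eVariationOn.eq_of_eqOn heq]
    refine eVariationOn.comp_le_of_monotoneOn _ ψ ?_ (Set.mapsTo_univ _ _)
    intro a _ b _ hab
    show max (2*(a:ℝ)-1) 0 ≤ max (2*(b:ℝ)-1) 0
    exact max_le_max (by have : (a:ℝ) ≤ b := hab; linarith) le_rfl
  exact add_le_add h1 h2

/-- every point of a loop of length < 2δ lies in the δ-ball around the basepoint -/
lemma mem_ball_of_pathLength_lt {δ : ℝ} (η : Path x x)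
    (hlen : pathLength η < ENNReal.ofReal (2*δ)) (t : I) : η t ∈ Metric.ball x δ := by
  have h01 : (0:I) ≤ t := t.2.1
  have h11 : t ≤ (1:I) := t.2.2
  have key := eVariationOn.Icc_add_Icc (⇑η) h01 h11 (Set.mem_univ t)
  rw [Set.univ_inter, Set.univ_inter, Set.univ_inter, ← univ_eq_Icc] at key
  have e1 : edist x (η t) ≤ eVariationOn (⇑η) (Set.Icc 0 t) := by
    have := eVariationOn.edist_le (⇑η) (Set.left_mem_Icc.2 h01) (Set.right_mem_Icc.2 h01)
    rwa [η.source] at this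
  have e2 : edist x (η t) ≤ eVariationOn (⇑η) (Set.Icc t 1) := by
    have := eVariationOn.edist_le (⇑η) (Set.right_mem_Icc.2 h11) (Set.left_mem_Icc.2 h11)
    rwa [η.target] at this
  have hsum : edist x (η t) + edist x (η t) < ENNReal.ofReal (2*δ) := by
    calc edist x (η t) + edist x (η t) ≤ _ + _ := add_le_add e1 e2
    _ = eVariationOn (⇑η) Set.univ := key
    _ < _ := hlen
  have hδ0 : (0:ℝ) ≤ δ := by
    by_contra h
    push_neg at h
    rw [ENNReal.ofReal_eq_zero.2 (by linarith)] at hlen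
    exact (not_lt_of_ge zero_le) hlen
  have h2δ : ENNReal.ofReal (2*δ) = ENNReal.ofReal δ + ENNReal.ofReal δ := by
    rw [two_mul, ENNReal.ofReal_add hδ0 hδ0]
  rw [h2δ] at hsum
  have : edist x (η t) < ENNReal.ofReal δ := by
    by_contra h
    push_neg at h
    exact absurd hsum (not_lt_of_ge (add_le_add h h))
  rw [mem_ball, dist_comm, ← edist_lt_ofReal]
  exact this

lemma IsLengthSpace_exists_path_lt
    (hY : ∀ x y : X, ENNReal.ofReal (dist x y) = ⨅ γ : Path x y, pathLength γ)
    {a b : X} {r : ℝ} (h : dist a b < r) :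
    ∃ γ : Path a b, pathLength γ < ENNReal.ofReal r := by
  have h2 : (⨅ γ : Path a b, pathLength γ) < ENNReal.ofReal r := by
    rw [← hY a b]
    exact (ENNReal.ofReal_lt_ofReal_iff_of_nonneg dist_nonneg).2 h
  exact iInf_lt_iff.mp h2

lemma pathLength_refl {X : Type*} [MetricSpace X] (x : X) : pathLength (Path.refl x) = 0 := by
  unfold pathLength
  apply eVariationOn.constant_on
  rintro v ⟨u, -, rfl⟩ w ⟨u', -, rfl⟩
  rfl


end AuxBasic
noncomputable section

open CategoryTheory FundamentalGroupoid

variable {X : Type*} [TopologicalSpace X]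

/-- homotopy class of a path as a morphism in the fundamental groupoid -/
def clp {x y : X} (u : Path x y) : FundamentalGroupoid.mk x ⟶ FundamentalGroupoid.mk y := ⟦u⟧

lemma clp_trans {x y z : X} (u : Path x y) (v : Path y z) :
    clp (u.trans v) = clp u ≫ clp v :=
  rfl

lemma clp_symm {x y : X} (u : Path x y) : clp u.symm = CategoryTheory.inv (clp u) := by
  rw [← Groupoid.inv_eq_inv]
  rfl

lemma clp_refl (x : X) : clp (Path.refl x) = 𝟙 (FundamentalGroupoid.mk x) := rfl

lemma clp_homotopic {x y : X} (u v : Path x y) (h : u.Homotopic v) : clp u = clp v :=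
  Quotient.sound h

lemma clp_cast {x y x' y' : X} (u : Path x y) (h1 : x' = x) (h2 : y' = y) :
    clp (u.cast h1 h2) = eqToHom (by rw [h1]) ≫ clp u ≫ eqToHom (by rw [h2]) := by
  subst h1; subst h2
  simp only [eqToHom_refl, Category.comp_id, Category.id_comp]
  have : u.cast rfl rfl = u := by ext t; rfl
  rw [this]

lemma truncateOfLE_apply {a b : X} (γ : Path a b) {t₀ t₁ : ℝ} (h : t₀ ≤ t₁) (s : I) :
    (γ.truncateOfLE h) s = γ.extend (min (max (s:ℝ) t₀) t₁) := rfl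

/-- splitting a truncation of a path at an intermediate time -/
lemma clp_truncate_split {a b : X} (γ : Path a b) {t₁ t₂ : ℝ}
    (h0 : 0 ≤ t₁) (h12 : t₁ ≤ t₂) (h2 : t₂ ≤ 1) :
    clp (γ.truncateOfLE (h0.trans h12)) = clp (γ.truncateOfLE h0) ≫ clp (γ.truncateOfLE h12) := by
  rw [← clp_trans]
  have ht₁1 : t₁ ≤ 1 := h12.trans h2
  -- the reparametrisation function
  have hmem : ∀ s : I, (if (s:ℝ) ≤ 1/2 then min (2*(s:ℝ)) t₁ else max (2*(s:ℝ)-1) t₁) ∈ Set.Icc (0:ℝ) 1 := by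
    intro s
    split_ifs with h
    · exact ⟨le_min (mul_nonneg (by norm_num) s.2.1) h0, le_trans (min_le_right _ _) ht₁1⟩
    · exact ⟨le_trans h0 (le_max_right _ _), max_le (by have := s.2.2; linarith) ht₁1⟩
  set f : I → I := fun s => ⟨_, hmem s⟩ with hfdef
  have hf : Continuous f := by
    apply Continuous.subtype_mk
    apply Continuous.if_le
    · exact (continuous_const.mul continuous_subtype_val).min continuous_const
    · exact ((continuous_const.mul continuous_subtype_val).sub continuous_const).max continuous_const
    · exact continuous_subtype_val
    · exact continuous_const
    · intro s hs
      rw [hs]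
      norm_num
      rw [min_eq_right ht₁1, max_eq_right h0]
  have hf0 : f 0 = 0 := by
    apply Subtype.ext
    show (if ((0:I):ℝ) ≤ 1/2 then min (2*((0:I):ℝ)) t₁ else max (2*((0:I):ℝ)-1) t₁) = ((0:I):ℝ)
    norm_num
    exact h0
  have hf1 : f 1 = 1 := by
    apply Subtype.ext
    show (if ((1:I):ℝ) ≤ 1/2 then min (2*((1:I):ℝ)) t₁ else max (2*((1:I):ℝ)-1) t₁) = ((1:I):ℝ)
    norm_num [ht₁1]
  have heq : (γ.truncateOfLE (h0.trans h12)).reparam f hf hf0 hf1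
      = (γ.truncateOfLE h0).trans (γ.truncateOfLE h12) := by
    ext s
    show γ.extend (min (max ((f s):ℝ) 0) t₂) = ((γ.truncateOfLE h0).trans (γ.truncateOfLE h12)) s
    rw [Path.trans_apply]
    split_ifs with h
    · have hfs : ((f s):ℝ) = min (2*(s:ℝ)) t₁ := by
        show (if (s:ℝ) ≤ 1/2 then min (2*(s:ℝ)) t₁ else max (2*(s:ℝ)-1) t₁) = _
        rw [if_pos h]
      rw [hfs]
      show _ = γ.extend (min (max (2*(s:ℝ)) 0) t₁)
      rw [max_eq_left (le_min (mul_nonneg (by norm_num) s.2.1) h0),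
        max_eq_left (mul_nonneg (by norm_num) s.2.1), min_assoc, min_eq_left h12]
    · have hfs : ((f s):ℝ) = max (2*(s:ℝ)-1) t₁ := by
        show (if (s:ℝ) ≤ 1/2 then min (2*(s:ℝ)) t₁ else max (2*(s:ℝ)-1) t₁) = _
        rw [if_neg h]
      rw [hfs]
      show _ = γ.extend (min (max (2*(s:ℝ)-1) t₁) t₂)
      rw [max_eq_left (le_trans h0 (le_max_right _ _))]
  apply clp_homotopic
  exact heq ▸ ⟨Path.Homotopy.reparam _ f hf hf0 hf1⟩

/-- a truncation to time 0 is trivial -/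
lemma clp_truncate_zero {a b : X} (γ : Path a b) {t : ℝ} (h : 0 ≤ t) (ht : t = 0) :
    clp (γ.truncateOfLE h) = eqToHom (by rw [ht]) := by
  subst ht
  have : γ.truncateOfLE h = Path.refl (γ.extend 0) := by
    ext s
    show γ.extend (min (max (s:ℝ) 0) 0) = γ.extend 0
    rw [max_eq_left s.2.1, min_eq_right s.2.1]
  rw [this, eqToHom_refl]
  exact clp_refl _
/-- a truncation to time 1 is the whole path -/
lemma clp_truncate_one {a b : X} (γ : Path a b) {t : ℝ} (h : 0 ≤ t) (ht : t = 1) :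
    clp (γ.truncateOfLE h) = eqToHom (by rw [γ.extend_zero]) ≫ clp γ ≫
      eqToHom (by rw [ht, γ.extend_one]) := by
  subst ht
  have : γ.truncateOfLE h = γ.cast γ.extend_zero γ.extend_one := by
    ext s
    show γ.extend (min (max (s:ℝ) 0) 1) = γ s
    rw [max_eq_left s.2.1, min_eq_left s.2.2, Path.extend_extends']
  rw [this, clp_cast]

/-- homotopy class of a loop as an element of the fundamental group -/
noncomputable def fpc {p : X} (u : Path p p) : FundamentalGroup X p :=
  FundamentalGroup.fromPath (X := TopCat.of X) ⟦u⟧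

variable {p : X}

lemma loopClass_eq_fpc {y : X} (α : Path p y) (β : Path y y) :
    loopClass α β = fpc ((α.trans β).trans α.symm) := rfl

lemma fpc_hom (u : Path p p) : fpc u = clp u := rfl

lemma fpc_congr (u v : Path p p) (h : clp u = clp v) : fpc u = fpc v := by
  unfold fpc
  unfold clp at h
  rw [show (⟦u⟧ : Path.Homotopic.Quotient p p) = ⟦v⟧ from h]

lemma fpc_trans (u v : Path p p) : fpc (u.trans v) = fpc v * fpc u :=
  rfl

lemma fpc_refl : fpc (Path.refl p) = 1 := rfl

lemma fpc_symm (u : Path p p) : fpc u.symm = (fpc u)⁻¹ := rfl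

end

section MainProof

open CategoryTheory FundamentalGroupoid

theorem exists_short_loop_of_ne_coveringGroup
    {Y : Type*} [MetricSpace Y] [CompleteSpace Y] (hY : IsLengthSpace Y)
    (p : Y) (δ δ' : ℝ) (hδ' : 0 < δ') (hδ : δ' < δ)
    (hne : coveringGroup Y p δ ≠ coveringGroup Y p δ') :
    ∃ (y : Y) (β : Path y y) (α : Path p y),
      pathLength β < ENNReal.ofReal (2 * δ) ∧
      loopClass α β ∈ coveringGroup Y p δ ∧
      loopClass α β ∉ coveringGroup Y p δ' := by
  classical
  have hδ0 : 0 < δ := lt_trans hδ' hδ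
  have hmono : coveringGroup Y p δ' ≤ coveringGroup Y p δ := by
    apply Subgroup.normalClosure_le_normal
    rintro g ⟨z, η, w, ⟨c, hcb⟩, rfl⟩
    exact Subgroup.subset_normalClosure
      ⟨z, η, w, ⟨c, fun t => Metric.ball_subset_ball (le_of_lt hδ) (hcb t)⟩, rfl⟩
  obtain ⟨y, β, α, c, hc, hnot⟩ :
      ∃ (y : Y) (β : Path y y) (α : Path p y) (c : Y),
        (∀ t, β t ∈ Metric.ball c δ) ∧ loopClass α β ∉ coveringGroup Y p δ' := by
    by_contra hcon
    push_neg at hcon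
    refine hne (le_antisymm ?_ hmono)
    apply Subgroup.normalClosure_le_normal
    rintro g ⟨z, η, w, ⟨c, hcball⟩, rfl⟩
    exact hcon z η w c hcball
  by_contra hcon2
  push_neg at hcon2
  have K : ∀ (z : Y) (η : Path z z) (w : Path p z),
      pathLength η < ENNReal.ofReal (2*δ) → loopClass w η ∈ coveringGroup Y p δ' := by
    intro z η w hη
    refine hcon2 z η w (by rw [mul_comm] at hη ⊢; exact hη) ?_
    exact Subgroup.subset_normalClosure
      ⟨z, η, w, ⟨z, fun t => mem_ball_of_pathLength_lt η hη t⟩, rfl⟩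
  -- maximal distance from the center
  obtain ⟨t₀, -, ht₀⟩ := isCompact_univ.exists_isMaxOn Set.univ_nonempty
    ((continuous_const.dist β.continuous :
      Continuous (fun t : I => dist c (β t))).continuousOn)
  set r := dist c (β t₀) with hrdef
  have hrδ : r < δ := by have := hc t₀; rwa [Metric.mem_ball, dist_comm] at this
  have hr0 : 0 ≤ r := dist_nonneg
  set m := (r + δ)/2 with hmdef
  have hrm : r < m := by rw [hmdef]; linarith
  have hmδ : m < δ := by rw [hmdef]; linarith
  have hm0 : 0 < m := lt_of_le_of_lt hr0 hrm
  set ε := min δ' (δ - m) with hεdef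
  have hε0 : 0 < ε := lt_min hδ' (by linarith)
  have hεδ' : ε ≤ δ' := min_le_left _ _
  have hεδm : ε ≤ δ - m := min_le_right _ _
  -- uniform continuity modulus
  have huc : UniformContinuous ⇑β := CompactSpace.uniformContinuous_of_continuous β.continuous
  obtain ⟨d, hd0, hmod⟩ := Metric.uniformContinuous_iff.mp huc ε hε0
  obtain ⟨n0, hn0⟩ := exists_nat_one_div_lt hd0
  set N := n0 + 1 with hNdef
  have hN0 : 0 < (N:ℝ) := by rw [hNdef]; push_cast; linarith [Nat.cast_nonneg (α := ℝ) n0]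
  have hNd : 1/(N:ℝ) < d := by rw [hNdef]; push_cast; exact hn0
  -- the partition
  set T : ℕ → ℝ := fun k => k / N with hTdef
  have hT0 : T 0 = 0 := by simp [hTdef]
  have hTN : T N = 1 := by rw [hTdef]; field_simp
  have hTmono : ∀ k, T k ≤ T (k+1) := fun k => by
    rw [hTdef]
    apply (div_le_div_iff_of_pos_right hN0).mpr
    push_cast; linarith
  have hTnonneg : ∀ k, 0 ≤ T k := fun k => by rw [hTdef]; positivity
  have hTle1 : ∀ k, k ≤ N → T k ≤ 1 := fun k hk => by
    rw [hTdef, div_le_one hN0]; exact_mod_cast hk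
  have hTgap : ∀ k, T (k+1) - T k = 1/N := fun k => by
    rw [hTdef]; push_cast; ring
  have hTge1 : ∀ k, N ≤ k → 1 ≤ T k := fun k hk => by
    rw [hTdef, le_div_iff₀ hN0, one_mul]; exact_mod_cast hk
  -- the partition points
  set x : ℕ → Y := fun k => β.extend (T k) with hxdef
  have hx0 : x 0 = y := by rw [hxdef]; simp only [hT0]; exact β.extend_zero
  have hxN : x N = y := by rw [hxdef]; simp only [hTN]; exact β.extend_one
  have hxge : ∀ k, N ≤ k → x k = y := fun k hk => by
    rw [hxdef]; exact β.extend_of_one_le (hTge1 k hk)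
  -- distance estimates
  have hdistc : ∀ s : ℝ, dist c (β.extend s) ≤ r := by
    intro s
    rw [show β.extend s = β (Set.projIcc 0 1 zero_le_one s) from rfl]
    exact ht₀ (Set.mem_univ _)
  have hclose : ∀ (s u : ℝ), 0 ≤ s → s ≤ 1 → 0 ≤ u → u ≤ 1 → |s - u| ≤ 1/N →
      dist (β.extend s) (β.extend u) < ε := by
    intro s u hs0 hs1 hu0 hu1 hsu
    rw [β.extend_apply ⟨hs0, hs1⟩, β.extend_apply ⟨hu0, hu1⟩]
    apply hmod
    rw [Subtype.dist_eq, Real.dist_eq]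
    exact lt_of_le_of_lt hsu hNd
  -- radial paths
  have hsgex : ∀ k : ℕ, ∃ γ : Path c (x k), pathLength γ < ENNReal.ofReal m := by
    intro k
    apply IsLengthSpace_exists_path_lt hY
    exact lt_of_le_of_lt (hdistc (T k)) hrm
  choose sg hsg using hsgex
  -- short connecting paths
  have hgex : ∀ k : ℕ, ∃ γ : Path (x k) (x (k+1)), pathLength γ < ENNReal.ofReal ε := by
    intro k
    by_cases hk : k + 1 ≤ N
    · apply IsLengthSpace_exists_path_lt hY
      apply hclose _ _ (hTnonneg k) (hTle1 k (by omega)) (hTnonneg (k+1)) (hTle1 (k+1) hk)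
      rw [abs_sub_comm, abs_of_nonneg (by linarith [hTmono k]), hTgap k]
    · have h1 : x k = y := hxge k (by omega)
      have h2 : x (k+1) = y := hxge (k+1) (by omega)
      refine ⟨(Path.refl y).cast h1 h2, ?_⟩
      rw [show pathLength ((Path.refl y).cast h1 h2) = pathLength (Path.refl y) from rfl,
        pathLength_refl]
      exact ENNReal.ofReal_pos.2 hε0
  choose g hg using hgex
  -- initial segments of β
  set βtr : ∀ k : ℕ, Path y (x k) :=
    fun k => (β.truncateOfLE (hTnonneg k)).cast β.extend_zero.symm rfl with hβtrdef
  set piece : ∀ k : ℕ, Path (x k) (x (k+1)) := fun k => β.truncateOfLE (hTmono k) with hpiecedef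
  set A : Path p c := α.trans ((βtr 0).trans (sg 0).symm) with hAdef
  set ℓ : ℕ → Path p p :=
    fun k => (A.trans (sg k)).trans ((βtr k).symm.trans α.symm) with hℓdef
  -- the basic splitting identity
  have hb : ∀ k, k + 1 ≤ N → clp (βtr (k+1)) = clp (βtr k) ≫ clp (piece k) := by
    intro k hk
    show clp ((β.truncateOfLE (hTnonneg (k+1))).cast β.extend_zero.symm rfl) = _
    rw [clp_cast]
    have hsplit : clp (β.truncateOfLE (hTnonneg (k+1)))
        = clp (β.truncateOfLE (hTnonneg k)) ≫ clp (piece k) :=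
      clp_truncate_split β (hTnonneg k) (hTmono k) (hTle1 (k+1) hk)
    rw [hsplit]
    show _ = clp ((β.truncateOfLE (hTnonneg k)).cast β.extend_zero.symm rfl) ≫ clp (piece k)
    rw [clp_cast]
    simp
  -- main induction
  have main : ∀ k, k ≤ N → fpc (ℓ k) ∈ coveringGroup Y p δ' := by
    intro k
    induction k with
    | zero =>
      intro _
      have hcl : clp (ℓ 0) = clp (Path.refl p) := by
        rw [hℓdef, hAdef]
        simp only [clp_trans, clp_symm, clp_refl]
        simp
      rw [fpc_congr _ _ hcl, fpc_refl]
      exact one_mem _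
    | succ k ih =>
      intro hk1
      have hk : k ≤ N := by omega
      set Nk : Path c c := (sg (k+1)).trans ((g k).symm.trans (sg k).symm) with hNkdef
      set Sk : Path (x k) (x k) := (g k).trans (piece k).symm with hSkdef
      -- length bound for Nk
      have hlenN : pathLength Nk < ENNReal.ofReal (2*δ) := by
        have h1 := pathLength_trans_le (sg (k+1)) ((g k).symm.trans (sg k).symm)
        have h2 := pathLength_trans_le (g k).symm (sg k).symm
        rw [pathLength_symm, pathLength_symm] at h2
        calc pathLength Nk ≤ _ := h1
        _ ≤ pathLength (sg (k+1)) + (pathLength (g k) + pathLength (sg k)) :=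
            add_le_add le_rfl h2
        _ < ENNReal.ofReal m + (ENNReal.ofReal (δ - m) + ENNReal.ofReal m) := by
            refine ENNReal.add_lt_add (hsg _) (ENNReal.add_lt_add ?_ (hsg _))
            exact lt_of_lt_of_le (hg k) (ENNReal.ofReal_le_ofReal hεδm)
        _ = ENNReal.ofReal (m + ((δ - m) + m)) := by
            rw [← ENNReal.ofReal_add (by linarith) (by linarith),
              ← ENNReal.ofReal_add (by linarith) (by linarith)]
        _ < ENNReal.ofReal (2*δ) := (ENNReal.ofReal_lt_ofReal_iff (by linarith)).2 (by linarith)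
      have hNmem : fpc ((A.trans Nk).trans A.symm) ∈ coveringGroup Y p δ' := by
        have := K c Nk A hlenN
        rwa [loopClass_eq_fpc] at this
      -- ball bound for Sk
      have hgball : ∀ u : I, (g k) u ∈ Metric.ball (x k) δ' := by
        intro u
        have h1 : edist ((g k) 0) ((g k) u) ≤ pathLength (g k) := edist_le_pathLength _ 0 u
        rw [(g k).source] at h1
        have h2 : edist (x k) ((g k) u) < ENNReal.ofReal δ' :=
          lt_of_le_of_lt h1 (lt_of_lt_of_le (hg k) (ENNReal.ofReal_le_ofReal hεδ'))
        rw [Metric.mem_ball, dist_comm, ← edist_lt_ofReal]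
        exact h2
      have hpball : ∀ u : I, (piece k) u ∈ Metric.ball (x k) δ' := by
        intro u
        have happ : (piece k) u = β.extend (min (max (u:ℝ) (T k)) (T (k+1))) := rfl
        set s := min (max (u:ℝ) (T k)) (T (k+1)) with hsdef
        have hs0 : 0 ≤ s := le_min (le_trans (hTnonneg k) (le_max_right _ _)) (hTnonneg _)
        have hs1 : s ≤ 1 := le_trans (min_le_right _ _) (hTle1 _ hk1)
        have hlow : T k ≤ s := le_min (le_max_right _ _) (hTmono k)
        have hhigh : s ≤ T (k+1) := min_le_right _ _
        have hd := hclose (T k) s (hTnonneg k) (hTle1 k hk) hs0 hs1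
          (by rw [abs_sub_comm, abs_of_nonneg (by linarith)]; linarith [hTgap k])
        rw [Metric.mem_ball, happ, dist_comm]
        calc dist (β.extend (T k)) (β.extend s) < ε := hd
        _ ≤ δ' := hεδ'
      have hball : ∀ t, Sk t ∈ Metric.ball (x k) δ' := by
        intro t
        show ((g k).trans (piece k).symm) t ∈ _
        rw [Path.trans_apply]
        split_ifs with h
        · exact hgball _
        · exact hpball _
      have hSmem : fpc (((A.trans (sg k)).trans Sk).trans (A.trans (sg k)).symm)
          ∈ coveringGroup Y p δ' := by
        have : loopClass (A.trans (sg k)) Sk ∈ coveringGroup Y p δ' :=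
          Subgroup.subset_normalClosure ⟨x k, Sk, A.trans (sg k), ⟨x k, hball⟩, rfl⟩
        rwa [loopClass_eq_fpc] at this
      -- the key identity
      have hid : clp (ℓ (k+1)) =
          clp ((((A.trans Nk).trans A.symm).trans
            (((A.trans (sg k)).trans Sk).trans (A.trans (sg k)).symm)).trans (ℓ k)) := by
        rw [hℓdef, hNkdef, hSkdef]
        simp only [clp_trans, clp_symm, hb k hk1]
        simp
      rw [fpc_congr _ _ hid, fpc_trans, fpc_trans]
      exact mul_mem (ih hk) (mul_mem hSmem hNmem)
  -- conclusion
  have hx0N : x 0 = x N := by rw [hx0, hxN]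
  set F : Path (x 0) (x 0) := (sg 0).symm.trans ((sg N).cast rfl hx0N) with hFdef
  have hlenF : pathLength F < ENNReal.ofReal (2*δ) := by
    calc pathLength F ≤ _ + _ := pathLength_trans_le _ _
    _ = pathLength (sg 0) + pathLength (sg N) := by
        rw [pathLength_symm, pathLength_cast]
    _ < ENNReal.ofReal m + ENNReal.ofReal m := ENNReal.add_lt_add (hsg _) (hsg _)
    _ = ENNReal.ofReal (m + m) := (ENNReal.ofReal_add (by linarith) (by linarith)).symm
    _ < ENNReal.ofReal (2*δ) := (ENNReal.ofReal_lt_ofReal_iff (by linarith)).2 (by linarith)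
  have hJ : fpc (((α.trans (βtr 0)).trans F).trans (α.trans (βtr 0)).symm)
      ∈ coveringGroup Y p δ' := by
    have := K (x 0) F (α.trans (βtr 0)) hlenF
    rwa [loopClass_eq_fpc] at this
  have hL := main N le_rfl
  -- eqToHom bookkeeping
  have hb0 : clp (βtr 0) = eqToHom (show FundamentalGroupoid.mk y = FundamentalGroupoid.mk (x 0)
      by rw [hx0]) := by
    show clp ((β.truncateOfLE (hTnonneg 0)).cast β.extend_zero.symm rfl) = _
    rw [clp_cast, clp_truncate_zero β (hTnonneg 0) hT0]
    simp
  have hbN : clp (βtr N) = clp β ≫ eqToHom (show FundamentalGroupoid.mk y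
      = FundamentalGroupoid.mk (x N) by rw [hxN]) := by
    show clp ((β.truncateOfLE (hTnonneg N)).cast β.extend_zero.symm rfl) = _
    rw [clp_cast, clp_truncate_one β (hTnonneg N) hTN]
    simp
  have hsgNc : clp ((sg N).cast rfl hx0N) = clp (sg N) ≫ eqToHom (show FundamentalGroupoid.mk (x N)
      = FundamentalGroupoid.mk (x 0) by rw [hx0N]) := by
    rw [clp_cast]
    simp
  have hfinal : clp ((α.trans β).trans α.symm) =
      clp (((ℓ N).symm).trans (((α.trans (βtr 0)).trans F).trans (α.trans (βtr 0)).symm)) := by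
    rw [hℓdef, hAdef, hFdef]
    simp only [clp_trans, clp_symm, hb0, hbN, hsgNc]
    simp
  refine hnot ?_
  rw [loopClass_eq_fpc, fpc_congr _ _ hfinal, fpc_trans, fpc_symm]
  exact mul_mem hJ (inv_mem hL)

end MainProof
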